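/- arXiv:2604.26134 — 3 statements merged into one kernel-verified Lean document; each statement's English description precedes it below -/
import Mathlib

section
/- For any exposed point p of the reachable set R(T) (i.e., there exists ζ ∈ ℝ^n with ζᵀp > ζᵀq for all q ∈ R(T) \ {p}), there exists a vector c ∈ ℝ^n such that the bang-bang control u*(·; c) is admissible and drives the system from the origin at time t₀ exactly to p at time T, i.e., x(T; u*(·; c)) = p. -/
set_option maxHeartbeats 1000000


open MeasureTheory Matrix

/-- Matrix exponential. -/
noncomputable def mexp {n : ℕ} (M : Matrix (Fin n) (Fin n) ℝ) : Matrix (Fin n) (Fin n) ℝ :=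
  NormedSpace.exp M

/-- State reached from the origin at time `T`: `x(T;u) = ∫_{t₀}^{T} e^{A(T−t)} B u(t) dt`. -/
noncomputable def endpoint {n m : ℕ} (A : Matrix (Fin n) (Fin n) ℝ)
    (B : Matrix (Fin n) (Fin m) ℝ) (t₀ T : ℝ) (u : ℝ → Fin m → ℝ) : Fin n → ℝ :=
  ∫ t in t₀..T, (mexp ((T - t) • A)).mulVec (B.mulVec (u t))

/-- Admissible control: measurable with componentwise bounds `u̲ ≤ u(t) ≤ ū` on `[t₀,T]`. -/
def Admissible {m : ℕ} (t₀ T : ℝ) (ulo uhi : Fin m → ℝ) (u : ℝ → Fin m → ℝ) : Prop :=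
  Measurable u ∧ ∀ t ∈ Set.Icc t₀ T, ∀ i, ulo i ≤ u t i ∧ u t i ≤ uhi i

/-- Reachable set at time `T` from the origin. -/
def ReachSet {n m : ℕ} (A : Matrix (Fin n) (Fin n) ℝ) (B : Matrix (Fin n) (Fin m) ℝ)
    (t₀ T : ℝ) (ulo uhi : Fin m → ℝ) : Set (Fin n → ℝ) :=
  {x | ∃ u, Admissible t₀ T ulo uhi u ∧ x = endpoint A B t₀ T u}

/-- `ψ(t;c) = Bᵀ e^{Aᵀ(T−t)} c`. -/
noncomputable def psi {n m : ℕ} (A : Matrix (Fin n) (Fin n) ℝ)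
    (B : Matrix (Fin n) (Fin m) ℝ) (T : ℝ) (c : Fin n → ℝ) (t : ℝ) : Fin m → ℝ :=
  Bᵀ.mulVec ((mexp ((T - t) • Aᵀ)).mulVec c)

/-- Bang-bang control: `u*_i(t) = ū_i` if `ψ_i(t;c) ≥ 0`, else `u̲_i`. -/
noncomputable def bang {n m : ℕ} (A : Matrix (Fin n) (Fin n) ℝ)
    (B : Matrix (Fin n) (Fin m) ℝ) (T : ℝ) (ulo uhi : Fin m → ℝ)
    (c : Fin n → ℝ) (t : ℝ) (i : Fin m) : ℝ :=
  if 0 ≤ psi A B T c t i then uhi i else ulo i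

section Aux

attribute [local instance] Matrix.linftyOpNormedAddCommGroup Matrix.linftyOpNormedRing
  Matrix.linftyOpNormedAlgebra

lemma continuous_mexp {n : ℕ} (A : Matrix (Fin n) (Fin n) ℝ) (T : ℝ) :
    Continuous fun t : ℝ => mexp ((T - t) • A) := by
  have h1 : Continuous fun t : ℝ => (T - t) • A :=
    (continuous_const.sub continuous_id).smul continuous_const
  exact NormedSpace.exp_continuous.comp h1

lemma continuous_mulVec_pair {k l : ℕ} :
    Continuous fun p : Matrix (Fin k) (Fin l) ℝ × (Fin l → ℝ) => p.1.mulVec p.2 := by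
  refine continuous_pi fun i => ?_
  simp only [Matrix.mulVec, dotProduct]
  exact continuous_finset_sum _ fun j _ =>
    ((continuous_apply j).comp ((continuous_apply i).comp continuous_fst)).mul
      ((continuous_apply j).comp continuous_snd)

lemma continuous_g {n m : ℕ} (A : Matrix (Fin n) (Fin n) ℝ)
    (B : Matrix (Fin n) (Fin m) ℝ) (T : ℝ) :
    Continuous fun p : ℝ × (Fin m → ℝ) =>
      (mexp ((T - p.1) • A)).mulVec (B.mulVec p.2) :=
  continuous_mulVec_pair.comp
    (Continuous.prodMk ((continuous_mexp A T).comp continuous_fst)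
      (continuous_mulVec_pair.comp (Continuous.prodMk continuous_const continuous_snd)))

lemma continuous_psi {n m : ℕ} (A : Matrix (Fin n) (Fin n) ℝ)
    (B : Matrix (Fin n) (Fin m) ℝ) (T : ℝ) (c : Fin n → ℝ) :
    Continuous fun t : ℝ => psi A B T c t := by
  unfold psi
  exact continuous_mulVec_pair.comp
    (Continuous.prodMk continuous_const
      (continuous_mulVec_pair.comp
        (Continuous.prodMk (continuous_mexp Aᵀ T) continuous_const)))

lemma intervalIntegrable_aux {n m : ℕ} (A : Matrix (Fin n) (Fin n) ℝ)
    (B : Matrix (Fin n) (Fin m) ℝ) {t₀ T : ℝ} (ht : t₀ ≤ T) (ulo uhi : Fin m → ℝ)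
    {u : ℝ → Fin m → ℝ} (hu : Admissible t₀ T ulo uhi u) :
    IntervalIntegrable (fun t => (mexp ((T - t) • A)).mulVec (B.mulVec (u t)))
      MeasureTheory.volume t₀ T := by
  have hg := continuous_g A B T
  have hmeas : Measurable fun t => (mexp ((T - t) • A)).mulVec (B.mulVec (u t)) := by
    have h1 : Measurable fun t : ℝ => (t, u t) := measurable_id.prodMk hu.1
    have h2 := hg.measurable.comp h1
    exact h2
  have hK : IsCompact (Set.Icc t₀ T ×ˢ Set.Icc ulo uhi) := isCompact_Icc.prod isCompact_Icc
  obtain ⟨C, hC⟩ := hK.exists_bound_of_continuousOn hg.continuousOn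
  rw [intervalIntegrable_iff_integrableOn_Icc_of_le ht]
  apply MeasureTheory.Measure.integrableOn_of_bounded (M := C)
  · rw [Real.volume_Icc]; exact ENNReal.ofReal_ne_top
  · exact hmeas.aestronglyMeasurable
  · filter_upwards [MeasureTheory.ae_restrict_mem measurableSet_Icc] with t htI
    exact hC (t, u t) ⟨htI, Set.mem_Icc.mpr
      ⟨fun i => (hu.2 t htI i).1, fun i => (hu.2 t htI i).2⟩⟩

end Aux

lemma dot_integrand {n m : ℕ} (A : Matrix (Fin n) (Fin n) ℝ)
    (B : Matrix (Fin n) (Fin m) ℝ) (T : ℝ) (ζ : Fin n → ℝ) (t : ℝ) (v : Fin m → ℝ) :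
    ζ ⬝ᵥ (mexp ((T - t) • A)).mulVec (B.mulVec v) = psi A B T ζ t ⬝ᵥ v := by
  have hT : mexp ((T - t) • Aᵀ) = (mexp ((T - t) • A))ᵀ := by
    rw [mexp, mexp, ← Matrix.transpose_smul, Matrix.exp_transpose]
  rw [psi, hT, Matrix.dotProduct_mulVec, Matrix.dotProduct_mulVec,
    Matrix.mulVec_transpose, Matrix.mulVec_transpose]

/-- The dot product with a fixed vector as a continuous linear map. -/
noncomputable def dotCLM {n : ℕ} (ζ : Fin n → ℝ) : (Fin n → ℝ) →L[ℝ] ℝ :=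
  LinearMap.toContinuousLinearMap
    { toFun := fun x => ζ ⬝ᵥ x
      map_add' := fun x y => dotProduct_add ζ x y
      map_smul' := fun r x => by simp [dotProduct_smul, smul_eq_mul] }

@[simp] lemma dotCLM_apply {n : ℕ} (ζ x : Fin n → ℝ) : dotCLM ζ x = ζ ⬝ᵥ x := rfl

/-- For any exposed point `p` of the reachable set `R(T)`, there exists `c` such that the
bang-bang control `u*(·;c)` is admissible and steers the system from the origin to `p`. -/
theorem exposed_point_reached_by_bang_bang {n m : ℕ}
    (A : Matrix (Fin n) (Fin n) ℝ) (B : Matrix (Fin n) (Fin m) ℝ)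
    (t₀ T : ℝ) (ht : t₀ < T) (ulo uhi : Fin m → ℝ) (hbnd : ulo ≤ uhi)
    (p : Fin n → ℝ) (hp : p ∈ ReachSet A B t₀ T ulo uhi)
    (hexposed : ∃ ζ : Fin n → ℝ, ∀ q ∈ ReachSet A B t₀ T ulo uhi, q ≠ p → ζ ⬝ᵥ q < ζ ⬝ᵥ p) :
    ∃ c : Fin n → ℝ, Admissible t₀ T ulo uhi (bang A B T ulo uhi c) ∧
      endpoint A B t₀ T (bang A B T ulo uhi c) = p := by
  obtain ⟨ζ, hζ⟩ := hexposed
  have hadm : Admissible t₀ T ulo uhi (bang A B T ulo uhi ζ) := by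
    constructor
    · refine measurable_pi_lambda _ fun i => ?_
      have hcl : MeasurableSet {t : ℝ | 0 ≤ psi A B T ζ t i} :=
        (isClosed_le continuous_const ((continuous_apply i).comp
          (continuous_psi A B T ζ))).measurableSet
      exact Measurable.ite hcl measurable_const measurable_const
    · intro t _ i
      unfold bang
      split
      · exact ⟨hbnd i, le_rfl⟩
      · exact ⟨le_rfl, hbnd i⟩
  refine ⟨ζ, hadm, ?_⟩
  by_contra hne
  obtain ⟨u, hu, hpu⟩ := hp
  have hb_mem : endpoint A B t₀ T (bang A B T ulo uhi ζ) ∈ ReachSet A B t₀ T ulo uhi :=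
    ⟨_, hadm, rfl⟩
  have hlt := hζ _ hb_mem hne
  have hIu := intervalIntegrable_aux A B ht.le ulo uhi hu
  have hIb := intervalIntegrable_aux A B ht.le ulo uhi hadm
  have e1 : ζ ⬝ᵥ endpoint A B t₀ T u = ∫ t in t₀..T, psi A B T ζ t ⬝ᵥ u t := by
    rw [endpoint, show ζ ⬝ᵥ (∫ t in t₀..T, (mexp ((T - t) • A)).mulVec (B.mulVec (u t)))
        = dotCLM ζ (∫ t in t₀..T, (mexp ((T - t) • A)).mulVec (B.mulVec (u t))) from rfl,
      ← (dotCLM ζ).intervalIntegral_comp_comm hIu]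
    simp_rw [dotCLM_apply, dot_integrand]
  have e2 : ζ ⬝ᵥ endpoint A B t₀ T (bang A B T ulo uhi ζ)
      = ∫ t in t₀..T, psi A B T ζ t ⬝ᵥ bang A B T ulo uhi ζ t := by
    rw [endpoint, show ζ ⬝ᵥ (∫ t in t₀..T,
          (mexp ((T - t) • A)).mulVec (B.mulVec (bang A B T ulo uhi ζ t)))
        = dotCLM ζ (∫ t in t₀..T,
          (mexp ((T - t) • A)).mulVec (B.mulVec (bang A B T ulo uhi ζ t))) from rfl,
      ← (dotCLM ζ).intervalIntegral_comp_comm hIb]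
    simp_rw [dotCLM_apply, dot_integrand]
  have hIu' : IntervalIntegrable (fun t => psi A B T ζ t ⬝ᵥ u t) MeasureTheory.volume t₀ T := by
    have h : IntervalIntegrable (fun t => dotCLM ζ
        ((mexp ((T - t) • A)).mulVec (B.mulVec (u t)))) MeasureTheory.volume t₀ T :=
      ⟨(dotCLM ζ).integrable_comp hIu.1, (dotCLM ζ).integrable_comp hIu.2⟩
    simpa only [dotCLM_apply, dot_integrand] using h
  have hIb' : IntervalIntegrable (fun t => psi A B T ζ t ⬝ᵥ bang A B T ulo uhi ζ t)
      MeasureTheory.volume t₀ T := by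
    have h : IntervalIntegrable (fun t => dotCLM ζ
        ((mexp ((T - t) • A)).mulVec (B.mulVec (bang A B T ulo uhi ζ t))))
        MeasureTheory.volume t₀ T :=
      ⟨(dotCLM ζ).integrable_comp hIb.1, (dotCLM ζ).integrable_comp hIb.2⟩
    simpa only [dotCLM_apply, dot_integrand] using h
  have key : ζ ⬝ᵥ p ≤ ζ ⬝ᵥ endpoint A B t₀ T (bang A B T ulo uhi ζ) := by
    rw [hpu, e1, e2]
    refine intervalIntegral.integral_mono_on ht.le hIu' hIb' fun t htI => ?_
    unfold dotProduct
    refine Finset.sum_le_sum fun i _ => ?_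
    unfold bang
    rcases le_or_gt 0 (psi A B T ζ t i) with hpos | hneg
    · rw [if_pos hpos]
      exact mul_le_mul_of_nonneg_left (hu.2 t htI i).2 hpos
    · rw [if_neg (not_le.mpr hneg)]
      exact mul_le_mul_of_nonpos_left (hu.2 t htI i).1 hneg.le
  exact absurd key (not_le.mpr hlt)
end

section
/- In the single-input case with b ≠ 0 and u̲ < ū, if t₁ < t₂ with [t₁, t₂] ⊆ [t₀, T], then there exist two admissible controls u⁽¹⁾ and u⁽²⁾ that agree on [t₀, T] \ [t₁, t₂] but whose endpoints differ: x(T; u⁽¹⁾) ≠ x(T; u⁽²⁾). -/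
open MeasureTheory Matrix

/-- State reached from the origin (single input): `x(T;u) = ∫_{t₀}^{T} e^{A(T−t)} b u(t) dt`. -/
noncomputable def endpoint1 {n : ℕ} (A : Matrix (Fin n) (Fin n) ℝ)
    (b : Fin n → ℝ) (t₀ T : ℝ) (u : ℝ → ℝ) : Fin n → ℝ :=
  ∫ t in t₀..T, u t • (mexp ((T - t) • A)).mulVec b

/-- Admissible scalar control: measurable with `u̲ ≤ u(t) ≤ ū` on `[t₀,T]`. -/
def Admissible1 (t₀ T : ℝ) (ulo uhi : ℝ) (u : ℝ → ℝ) : Prop :=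
  Measurable u ∧ ∀ t ∈ Set.Icc t₀ T, ulo ≤ u t ∧ u t ≤ uhi

/-- Reachable set at time `T` from the origin (single input). -/
def ReachSet1 {n : ℕ} (A : Matrix (Fin n) (Fin n) ℝ) (b : Fin n → ℝ)
    (t₀ T : ℝ) (ulo uhi : ℝ) : Set (Fin n → ℝ) :=
  {x | ∃ u, Admissible1 t₀ T ulo uhi u ∧ x = endpoint1 A b t₀ T u}

/-- `ψ(t;c) = cᵀ e^{A(T−t)} b`. -/
noncomputable def psi1 {n : ℕ} (A : Matrix (Fin n) (Fin n) ℝ) (b : Fin n → ℝ)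
    (T : ℝ) (c : Fin n → ℝ) (t : ℝ) : ℝ :=
  c ⬝ᵥ (mexp ((T - t) • A)).mulVec b

lemma psi1_analyticAt {n : ℕ} (A : Matrix (Fin n) (Fin n) ℝ) (b : Fin n → ℝ)
    (T : ℝ) (c : Fin n → ℝ) (t : ℝ) : AnalyticAt ℝ (psi1 A b T c) t := by
  letI : SeminormedRing (Matrix (Fin n) (Fin n) ℝ) := Matrix.linftyOpSemiNormedRing
  letI : NormedRing (Matrix (Fin n) (Fin n) ℝ) := Matrix.linftyOpNormedRing
  letI : NormedAlgebra ℝ (Matrix (Fin n) (Fin n) ℝ) := Matrix.linftyOpNormedAlgebra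
  let ℓ : Matrix (Fin n) (Fin n) ℝ →ₗ[ℝ] ℝ :=
    { toFun := fun M => c ⬝ᵥ M.mulVec b
      map_add' := fun M N => by simp [Matrix.add_mulVec, dotProduct_add]
      map_smul' := fun r M => by simp [Matrix.smul_mulVec] }
  have h1 : AnalyticAt ℝ (fun s : ℝ => (T - s) • A) t :=
    (analyticAt_const.sub analyticAt_id).smul analyticAt_const
  have h2 : AnalyticAt ℝ (fun s : ℝ => NormedSpace.exp ((T - s) • A)) t :=
    (NormedSpace.exp_analytic (𝕂 := ℝ) _).comp h1
  exact ((ℓ.toContinuousLinearMap).analyticAt _).comp h2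

lemma psi1_continuous {n : ℕ} (A : Matrix (Fin n) (Fin n) ℝ) (b : Fin n → ℝ)
    (T : ℝ) (c : Fin n → ℝ) : Continuous (psi1 A b T c) :=
  continuous_iff_continuousAt.2 fun t => (psi1_analyticAt A b T c t).continuousAt

/-- With `b ≠ 0` and `u̲ < ū`, for any nondegenerate subinterval `[t₁,t₂] ⊆ [t₀,T]` there exist
two admissible controls agreeing outside `[t₁,t₂]` whose endpoints differ. -/
theorem exists_admissible_controls_with_distinct_endpoints {n : ℕ}
    (A : Matrix (Fin n) (Fin n) ℝ) (b : Fin n → ℝ) (hb : b ≠ 0)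
    (t₀ T : ℝ) (ht : t₀ < T) (ulo uhi : ℝ) (hbnd : ulo < uhi)
    (t₁ t₂ : ℝ) (h01 : t₀ ≤ t₁) (h12 : t₁ < t₂) (h2T : t₂ ≤ T) :
    ∃ u₁ u₂ : ℝ → ℝ, Admissible1 t₀ T ulo uhi u₁ ∧ Admissible1 t₀ T ulo uhi u₂ ∧
      (∀ t ∈ Set.Icc t₀ T \ Set.Icc t₁ t₂, u₁ t = u₂ t) ∧
      endpoint1 A b t₀ T u₁ ≠ endpoint1 A b t₀ T u₂ := by
  -- ψ(T; b) = b ⬝ᵥ b ≠ 0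
  have hpsiT : psi1 A b T b T = b ⬝ᵥ b := by
    simp [psi1, mexp, sub_self, NormedSpace.exp_zero, Matrix.one_mulVec]
  have hbb : b ⬝ᵥ b ≠ 0 := fun h => hb (dotProduct_self_eq_zero.mp h)
  -- there is ts in [t₁,t₂] where ψ(·;b) ≠ 0
  obtain ⟨ts, hts, hψts⟩ : ∃ ts ∈ Set.Icc t₁ t₂, psi1 A b T b ts ≠ 0 := by
    by_contra h
    push_neg at h
    have han : AnalyticOnNhd ℝ (psi1 A b T b) Set.univ :=
      fun t _ => psi1_analyticAt A b T b t
    have hfreq : ∃ᶠ s in nhdsWithin t₁ {t₁}ᶜ, psi1 A b T b s = 0 := by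
      have hev : ∀ᶠ s in nhdsWithin t₁ (Set.Ioi t₁), psi1 A b T b s = 0 := by
        filter_upwards [Ioc_mem_nhdsGT_of_mem ⟨le_refl t₁, h12⟩] with s hs
        exact h s ⟨hs.1.le, hs.2⟩
      exact hev.frequently.filter_mono
        (nhdsWithin_mono t₁ fun x hx => (Set.mem_Ioi.mp hx).ne')
    have := han.eqOn_zero_of_preconnected_of_frequently_eq_zero
      isPreconnected_univ (Set.mem_univ t₁) hfreq (Set.mem_univ T)
    rw [hpsiT] at this
    exact hbb this
  -- choose a sign c so that φ := ψ(·;c) is positive at ts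
  obtain ⟨c, hφts⟩ : ∃ c : Fin n → ℝ, 0 < psi1 A b T c ts := by
    rcases lt_or_gt_of_ne hψts with hneg | hpos
    · refine ⟨-b, ?_⟩
      have h' : psi1 A b T (-b) ts = -psi1 A b T b ts := by
        simp [psi1, neg_dotProduct]
      rw [h']; linarith
    · exact ⟨b, hpos⟩
  set φ : ℝ → ℝ := psi1 A b T c with hφdef
  have hφcont : Continuous φ := psi1_continuous A b T c
  -- positivity on a neighborhood of ts
  obtain ⟨δ, hδ, hball⟩ : ∃ δ > 0, ∀ s, |s - ts| < δ → 0 < φ s := by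
    rcases Metric.continuousAt_iff.mp (hφcont.continuousAt (x := ts)) (φ ts) hφts
      with ⟨δ, hδ, hd⟩
    refine ⟨δ, hδ, fun s hs => ?_⟩
    have h1 := hd (show dist s ts < δ by simpa [Real.dist_eq] using hs)
    rw [Real.dist_eq] at h1
    have h2 := abs_lt.mp h1
    linarith [h2.1]
  -- a nondegenerate subinterval [s₁,s₂] ⊆ [t₁,t₂] on which φ > 0
  set s₁ : ℝ := max t₁ (ts - δ / 2) with hs₁def
  set s₂ : ℝ := min t₂ (ts + δ / 2) with hs₂def
  have hts1 : t₁ ≤ ts := hts.1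
  have hts2 : ts ≤ t₂ := hts.2
  have hs₁s₂ : s₁ < s₂ := by
    apply max_lt <;> apply lt_min <;> linarith
  have hs₁t₁ : t₁ ≤ s₁ := le_max_left _ _
  have hs₂t₂ : s₂ ≤ t₂ := min_le_left _ _
  have ht₀s₁ : t₀ ≤ s₁ := le_trans h01 hs₁t₁
  have hs₂T : s₂ ≤ T := le_trans hs₂t₂ h2T
  have hφpos : ∀ s ∈ Set.Icc s₁ s₂, 0 < φ s := by
    intro s hs
    apply hball
    have hl : ts - δ / 2 ≤ s := le_trans (le_max_right _ _) hs.1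
    have hr : s ≤ ts + δ / 2 := le_trans hs.2 (min_le_right _ _)
    rw [abs_lt]; constructor <;> linarith
  -- the two controls
  set u₁ : ℝ → ℝ := fun _ => ulo with hu₁def
  set u₂ : ℝ → ℝ := (Set.Ioc s₁ s₂).piecewise (fun _ => uhi) (fun _ => ulo) with hu₂def
  have hadm₁ : Admissible1 t₀ T ulo uhi u₁ :=
    ⟨measurable_const, fun t _ => ⟨le_refl _, hbnd.le⟩⟩
  have hadm₂ : Admissible1 t₀ T ulo uhi u₂ := by
    refine ⟨Measurable.piecewise measurableSet_Ioc measurable_const measurable_const,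
      fun t _ => ?_⟩
    by_cases h : t ∈ Set.Ioc s₁ s₂ <;>
      simp [hu₂def, Set.piecewise, h, le_refl, hbnd.le]
  have hagree : ∀ t ∈ Set.Icc t₀ T \ Set.Icc t₁ t₂, u₁ t = u₂ t := by
    intro t ht'
    have hnm : t ∉ Set.Ioc s₁ s₂ := fun hmem =>
      ht'.2 ⟨le_trans hs₁t₁ hmem.1.le, le_trans hmem.2 hs₂t₂⟩
    simp [hu₁def, hu₂def, Set.piecewise, hnm]
  -- the continuous vector-valued kernel
  set v : ℝ → (Fin n → ℝ) := fun t => (mexp ((T - t) • A)).mulVec b with hvdef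
  have hvcont : Continuous v := by
    apply continuous_pi
    intro i
    have h' : (fun t => v t i) = psi1 A b T (Pi.single i 1) := by
      funext t
      simp [hvdef, psi1, single_dotProduct]
    rw [h']
    exact psi1_continuous A b T _
  -- integrability
  have hint : ∀ u : ℝ → ℝ, Admissible1 t₀ T ulo uhi u →
      IntervalIntegrable (fun t => u t • v t) volume t₀ T := by
    intro u hu
    rw [intervalIntegrable_iff]
    obtain ⟨C, hC⟩ := (isCompact_uIcc (a := t₀) (b := T)).exists_bound_of_continuousOn
      hvcont.continuousOn
    set K : ℝ := max |ulo| |uhi| with hKdef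
    apply Measure.integrableOn_of_bounded (M := K * C)
    · exact (measure_Ioc_lt_top (a := min t₀ T) (b := max t₀ T)).ne
    · exact (hu.1.smul hvcont.measurable).aestronglyMeasurable
    · rw [ae_restrict_iff' measurableSet_uIoc]
      filter_upwards with t htI
      have htIcc : t ∈ Set.Icc t₀ T := by
        rw [Set.uIoc_of_le ht.le] at htI
        exact ⟨htI.1.le, htI.2⟩
      have hub := hu.2 t htIcc
      have hu_abs : |u t| ≤ K := by
        rw [abs_le]
        constructor
        · have := neg_abs_le ulo
          have := le_max_left |ulo| |uhi|
          linarith [hub.1]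
        · have := le_abs_self uhi
          have := le_max_right |ulo| |uhi|
          linarith [hub.2]
      have hvb : ‖v t‖ ≤ C := hC t (Set.uIoc_subset_uIcc htI)
      calc ‖u t • v t‖ = |u t| * ‖v t‖ := by rw [norm_smul, Real.norm_eq_abs]
        _ ≤ K * C := mul_le_mul hu_abs hvb (norm_nonneg _) (le_trans (abs_nonneg _) hu_abs)
  -- dot with c commutes with the integral
  let ℓ : (Fin n → ℝ) →ₗ[ℝ] ℝ :=
    { toFun := fun x => c ⬝ᵥ x
      map_add' := fun x y => by simp [dotProduct_add]
      map_smul' := fun r x => by simp }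
  have key : ∀ u : ℝ → ℝ, Admissible1 t₀ T ulo uhi u →
      c ⬝ᵥ endpoint1 A b t₀ T u = ∫ t in t₀..T, u t * φ t := by
    intro u hu
    have h1 := (ℓ.toContinuousLinearMap).intervalIntegral_comp_comm (hint u hu)
    have h2 : ∀ t, ℓ.toContinuousLinearMap (u t • v t) = u t * φ t := by
      intro t
      show c ⬝ᵥ (u t • v t) = u t * φ t
      rw [dotProduct_smul]
      rfl
    calc c ⬝ᵥ endpoint1 A b t₀ T u
        = ℓ.toContinuousLinearMap (∫ t in t₀..T, u t • v t) := rfl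
      _ = ∫ t in t₀..T, ℓ.toContinuousLinearMap (u t • v t) := h1.symm
      _ = ∫ t in t₀..T, u t * φ t := by simp_rw [h2]
  -- scalar integrability
  have hsint : ∀ u : ℝ → ℝ, Admissible1 t₀ T ulo uhi u →
      IntervalIntegrable (fun t => u t * φ t) volume t₀ T := by
    intro u hu
    have hiu := hint u hu
    have : IntervalIntegrable (fun t => ℓ.toContinuousLinearMap (u t • v t)) volume t₀ T :=
      ⟨ℓ.toContinuousLinearMap.integrable_comp hiu.1, ℓ.toContinuousLinearMap.integrable_comp hiu.2⟩
    convert this using 2 with t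
    show u t * φ t = c ⬝ᵥ (u t • v t)
    rw [dotProduct_smul]
    rfl
  -- the difference of the dot products
  have hdiff : c ⬝ᵥ endpoint1 A b t₀ T u₂ - c ⬝ᵥ endpoint1 A b t₀ T u₁
      = ∫ t in s₁..s₂, (uhi - ulo) * φ t := by
    rw [key u₂ hadm₂, key u₁ hadm₁,
      ← intervalIntegral.integral_sub (hsint u₂ hadm₂) (hsint u₁ hadm₁)]
    have hind : ∀ t, u₂ t * φ t - u₁ t * φ t
        = Set.indicator (Set.Ioc s₁ s₂) (fun t => (uhi - ulo) * φ t) t := by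
      intro t
      by_cases h : t ∈ Set.Ioc s₁ s₂ <;>
        simp [hu₁def, hu₂def, Set.piecewise, Set.indicator, h] <;> ring
    simp_rw [hind]
    rw [intervalIntegral.integral_of_le ht.le,
      setIntegral_indicator measurableSet_Ioc,
      Set.inter_eq_self_of_subset_right (Set.Ioc_subset_Ioc ht₀s₁ hs₂T),
      ← intervalIntegral.integral_of_le hs₁s₂.le]
  -- the right-hand side is positive
  have hpos : 0 < ∫ t in s₁..s₂, (uhi - ulo) * φ t := by
    apply intervalIntegral.intervalIntegral_pos_of_pos_on
    · exact (continuous_const.mul hφcont).intervalIntegrable s₁ s₂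
    · intro x hx
      have := hφpos x ⟨hx.1.le, hx.2.le⟩
      have h' : 0 < uhi - ulo := by linarith
      positivity
    · exact hs₁s₂
  refine ⟨u₁, u₂, hadm₁, hadm₂, hagree, fun heq => ?_⟩
  rw [heq, sub_self] at hdiff
  exact hpos.ne' hdiff.symm
end

section
/- In the single-input case with b ≠ 0 and u̲ < ū, let p be an exposed point of the reachable set R(T) with exposing vector c, i.e., cᵀ p > cᵀ q for all q ∈ R(T) \ {p}. Then there is no nondegenerate interval [t₁, t₂] ⊆ [t₀, T] (t₁ < t₂) on which ψ(·; c) vanishes identically. -/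
open MeasureTheory Matrix

section Aux

lemma mexp_neg_mul_mexp {n : ℕ} (M : Matrix (Fin n) (Fin n) ℝ) :
    mexp (-M) * mexp M = 1 := by
  rw [mexp, mexp, ← Matrix.exp_add_of_commute (-M) M ((Commute.refl M).neg_left),
    neg_add_cancel, NormedSpace.exp_zero]

lemma mexp_mulVec_ne_zero {n : ℕ} (M : Matrix (Fin n) (Fin n) ℝ) {b : Fin n → ℝ} (hb : b ≠ 0) :
    (mexp M).mulVec b ≠ 0 := by
  intro h
  apply hb
  have h2 := congrArg (fun x => (mexp (-M)).mulVec x) h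
  simpa [Matrix.mulVec_mulVec, mexp_neg_mul_mexp, Matrix.one_mulVec, Matrix.mulVec_zero] using h2

attribute [local instance] Matrix.linftyOpNormedAddCommGroup Matrix.linftyOpNormedRing
  Matrix.linftyOpNormedAlgebra

lemma continuous_mexp_mulVec {n : ℕ} (A : Matrix (Fin n) (Fin n) ℝ) (b : Fin n → ℝ) (T : ℝ) :
    Continuous fun t : ℝ => (mexp ((T - t) • A)).mulVec b := by
  have h1 : Continuous fun t : ℝ => mexp ((T - t) • A) := by
    have h2 := (NormedSpace.exp_continuous (𝔸 := Matrix (Fin n) (Fin n) ℝ))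
    exact h2.comp ((continuous_const.sub continuous_id).smul continuous_const)
  apply continuous_pi
  intro i
  simp only [Matrix.mulVec, dotProduct]
  apply continuous_finset_sum
  intro j _
  exact ((continuous_apply j).comp ((continuous_apply i).comp h1)).mul continuous_const

end Aux

/-- With `b ≠ 0` and `u̲ < ū`, if `p` is an exposed point of `R(T)` with exposing vector `c`,
then `ψ(·;c)` does not vanish identically on any nondegenerate subinterval of `[t₀,T]`. -/
theorem psi_not_vanishing_on_interval_of_exposed {n : ℕ}
    (A : Matrix (Fin n) (Fin n) ℝ) (b : Fin n → ℝ) (hb : b ≠ 0)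
    (t₀ T : ℝ) (ht : t₀ < T) (ulo uhi : ℝ) (hbnd : ulo < uhi)
    (p : Fin n → ℝ) (hp : p ∈ ReachSet1 A b t₀ T ulo uhi)
    (c : Fin n → ℝ)
    (hexposing : ∀ q ∈ ReachSet1 A b t₀ T ulo uhi, q ≠ p → c ⬝ᵥ q < c ⬝ᵥ p) :
    ¬ ∃ t₁ t₂ : ℝ, t₀ ≤ t₁ ∧ t₁ < t₂ ∧ t₂ ≤ T ∧
        ∀ t ∈ Set.Icc t₁ t₂, psi1 A b T c t = 0 := by
  rintro ⟨t₁, t₂, ht₀₁, h₁₂, h₂T, hψ⟩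
  obtain ⟨u, ⟨humeas, hubd⟩, hpu⟩ := hp
  set v : ℝ → (Fin n → ℝ) := fun t => (mexp ((T - t) • A)).mulVec b with hv_def
  have hvcont : Continuous v := continuous_mexp_mulVec A b T
  have hvne : ∀ t, v t ≠ 0 := fun t => mexp_mulVec_ne_zero _ hb
  obtain ⟨i, hi⟩ := Function.ne_iff.1 (hvne t₁)
  set f : ℝ → ℝ := fun t => v t i with hf_def
  have hfcont : Continuous f := (continuous_apply i).comp hvcont
  have hfne : f t₁ ≠ 0 := by simpa [hf_def] using hi
  -- find a small subinterval [t₁, t₂'] on which f is nonvanishing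
  have hopen : IsOpen (f ⁻¹' ({0}ᶜ)) := (isOpen_compl_singleton).preimage hfcont
  obtain ⟨ε, hε, hball⟩ := Metric.isOpen_iff.1 hopen t₁ hfne
  set t₂' : ℝ := min t₂ (t₁ + ε / 2) with ht₂'_def
  have h₁₂' : t₁ < t₂' := lt_min h₁₂ (by linarith)
  have h₂'₂ : t₂' ≤ t₂ := min_le_left _ _
  have hIcc_ne : ∀ t ∈ Set.Icc t₁ t₂', f t ≠ 0 := by
    intro t htm
    apply hball
    rw [Metric.mem_ball, Real.dist_eq, abs_of_nonneg (by linarith [htm.1])]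
    have h3 : t ≤ t₁ + ε / 2 := le_trans htm.2 (min_le_right _ _)
    linarith
  -- basic positions
  have ht₁T : t₁ ≤ T := le_trans (le_of_lt h₁₂) h₂T
  have ht₂'I : t₂' ∈ Set.Icc t₀ T := ⟨by linarith, by linarith⟩
  have ht₁I : t₁ ∈ Set.Icc t₀ T := ⟨ht₀₁, ht₁T⟩
  have ht₀I : t₀ ∈ Set.Icc t₀ T := ⟨le_refl _, le_of_lt ht⟩
  have htTI : T ∈ Set.Icc t₀ T := ⟨le_of_lt ht, le_refl _⟩
  -- sign constancy of f on [t₁, t₂'] and nonvanishing integral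
  have hint_ne : (∫ t in t₁..t₂', f t) ≠ 0 := by
    rcases lt_or_gt_of_ne (hIcc_ne t₁ ⟨le_refl _, le_of_lt h₁₂'⟩) with hneg | hpos
    · -- f < 0 throughout
      have hall : ∀ t ∈ Set.Icc t₁ t₂', f t < 0 := by
        intro t htm
        by_contra hle
        push_neg at hle
        have h0 : (0 : ℝ) ∈ Set.Icc (f t₁) (f t) := ⟨le_of_lt hneg, hle⟩
        obtain ⟨z, hz, hz0⟩ := intermediate_value_Icc htm.1 hfcont.continuousOn h0
        exact hIcc_ne z ⟨hz.1, le_trans hz.2 htm.2⟩ hz0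
      have hposneg : 0 < ∫ t in t₁..t₂', -f t := by
        apply intervalIntegral.intervalIntegral_pos_of_pos_on
          ((hfcont.neg).intervalIntegrable _ _)
        · intro x hx
          simpa using hall x ⟨le_of_lt hx.1, le_of_lt hx.2⟩
        · exact h₁₂'
      rw [intervalIntegral.integral_neg] at hposneg
      intro hc0
      rw [hc0] at hposneg
      simp at hposneg
    · have hall : ∀ t ∈ Set.Icc t₁ t₂', 0 < f t := by
        intro t htm
        by_contra hle
        push_neg at hle
        have h0 : (0 : ℝ) ∈ Set.Icc (f t) (f t₁) := ⟨hle, le_of_lt hpos⟩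
        obtain ⟨z, hz, hz0⟩ := intermediate_value_Icc' htm.1 hfcont.continuousOn h0
        exact hIcc_ne z ⟨hz.1, le_trans hz.2 htm.2⟩ hz0
      refine ne_of_gt ?_
      apply intervalIntegral.intervalIntegral_pos_of_pos_on (hfcont.intervalIntegrable _ _)
      · intro x hx
        exact hall x ⟨le_of_lt hx.1, le_of_lt hx.2⟩
      · exact h₁₂'
  -- modified controls
  set S : Set ℝ := Set.Ioo t₁ t₂' with hS_def
  set up : ℝ → ℝ := fun t => if t ∈ S then uhi else u t with hup_def
  set um : ℝ → ℝ := fun t => if t ∈ S then ulo else u t with hum_def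
  have hup_meas : Measurable up := Measurable.ite measurableSet_Ioo measurable_const humeas
  have hum_meas : Measurable um := Measurable.ite measurableSet_Ioo measurable_const humeas
  have hup_bd : ∀ t ∈ Set.Icc t₀ T, ulo ≤ up t ∧ up t ≤ uhi := by
    intro t htm
    by_cases hts : t ∈ S
    · simp only [hup_def, if_pos hts]
      exact ⟨le_of_lt hbnd, le_refl _⟩
    · simp only [hup_def, if_neg hts]
      exact hubd t htm
  have hum_bd : ∀ t ∈ Set.Icc t₀ T, ulo ≤ um t ∧ um t ≤ uhi := by
    intro t htm
    by_cases hts : t ∈ S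
    · simp only [hum_def, if_pos hts]
      exact ⟨le_refl _, le_of_lt hbnd⟩
    · simp only [hum_def, if_neg hts]
      exact hubd t htm
  have hadm_up : Admissible1 t₀ T ulo uhi up := ⟨hup_meas, hup_bd⟩
  have hadm_um : Admissible1 t₀ T ulo uhi um := ⟨hum_meas, hum_bd⟩
  -- integrability
  obtain ⟨Mb, hMb⟩ := (isCompact_Icc (a := t₀) (b := T)).exists_bound_of_continuousOn
    hvcont.continuousOn
  set C : ℝ := max |ulo| |uhi| with hC_def
  have hC0 : 0 ≤ C := le_trans (abs_nonneg ulo) (le_max_left _ _)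
  have key : ∀ w : ℝ → ℝ, Measurable w → (∀ t ∈ Set.Icc t₀ T, ulo ≤ w t ∧ w t ≤ uhi) →
      ∀ a b', a ∈ Set.Icc t₀ T → b' ∈ Set.Icc t₀ T →
      IntervalIntegrable (fun t => w t • v t) volume a b' := by
    intro w hw hwb a b' ha hb'
    rw [intervalIntegrable_iff]
    have hsub : Set.uIoc a b' ⊆ Set.Icc t₀ T :=
      Set.uIoc_subset_uIcc.trans (Set.uIcc_subset_Icc ha hb')
    apply MeasureTheory.Integrable.mono' (g := fun _ => C * Mb)
    · exact integrableOn_const (ne_of_lt (lt_of_le_of_lt (measure_mono hsub) measure_Icc_lt_top))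
    · exact (hw.smul hvcont.measurable).aestronglyMeasurable
    · rw [MeasureTheory.ae_restrict_iff' measurableSet_uIoc]
      filter_upwards with t htm
      have htI := hsub htm
      obtain ⟨hbw1, hbw2⟩ := hwb t htI
      have h1 : ‖w t‖ ≤ C := by
        rw [Real.norm_eq_abs]
        refine abs_le.mpr ⟨?_, ?_⟩
        · have := neg_abs_le ulo
          have := le_max_left |ulo| |uhi|
          linarith
        · have := le_abs_self uhi
          have := le_max_right |ulo| |uhi|
          linarith
      calc ‖w t • v t‖ = ‖w t‖ * ‖v t‖ := norm_smul _ _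
        _ ≤ C * Mb := mul_le_mul h1 (hMb t htI) (norm_nonneg _) hC0
  -- dot product as a continuous linear map
  set Lcl : (Fin n → ℝ) →ₗ[ℝ] ℝ :=
    { toFun := fun x => c ⬝ᵥ x
      map_add' := fun x y => dotProduct_add c x y
      map_smul' := fun r x => by
        simp [dotProduct, Finset.mul_sum, mul_left_comm] } with hLcl_def
  set Lc : (Fin n → ℝ) →L[ℝ] ℝ := LinearMap.toContinuousLinearMap Lcl with hLc_def
  have hLc_apply : ∀ x, Lc x = c ⬝ᵥ x := fun x => rfl
  set Li : (Fin n → ℝ) →L[ℝ] ℝ :=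
    ContinuousLinearMap.proj (R := ℝ) (φ := fun _ : Fin n => ℝ) i with hLi_def
  have hLi_apply : ∀ x : Fin n → ℝ, Li x = x i := fun x => rfl
  -- c ⬝ᵥ endpoint
  have hc_int : ∀ w : ℝ → ℝ, Measurable w → (∀ t ∈ Set.Icc t₀ T, ulo ≤ w t ∧ w t ≤ uhi) →
      c ⬝ᵥ endpoint1 A b t₀ T w = ∫ t in t₀..T, w t * psi1 A b T c t := by
    intro w hw hwb
    have hInt := key w hw hwb t₀ T ht₀I htTI
    have hcomm := Lc.intervalIntegral_comp_comm hInt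
    calc c ⬝ᵥ endpoint1 A b t₀ T w = Lc (∫ t in t₀..T, w t • v t) := rfl
      _ = ∫ t in t₀..T, Lc (w t • v t) := hcomm.symm
      _ = ∫ t in t₀..T, w t * psi1 A b T c t := by
          apply intervalIntegral.integral_congr
          intro t _
          beta_reduce
          rw [hLc_apply]
          simp [psi1, dotProduct, Finset.mul_sum, mul_left_comm, mul_comm,
            Pi.smul_apply, smul_eq_mul, Finset.sum_mul, hv_def]
  -- coordinate i of endpoint, split into three pieces
  have keyf : ∀ w : ℝ → ℝ, Measurable w → (∀ t ∈ Set.Icc t₀ T, ulo ≤ w t ∧ w t ≤ uhi) →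
      ∀ a b', a ∈ Set.Icc t₀ T → b' ∈ Set.Icc t₀ T →
      IntervalIntegrable (fun t => w t * f t) volume a b' := by
    intro w hw hwb a b' ha hb'
    have hInt := key w hw hwb a b' ha hb'
    rw [intervalIntegrable_iff] at hInt ⊢
    have h2 := Li.integrable_comp hInt
    have h3 : (fun t => Li (w t • v t)) = fun t => w t * f t := by
      funext t
      rw [hLi_apply]
      simp [hf_def]
    rwa [h3] at h2
  have hsplit : ∀ w : ℝ → ℝ, Measurable w → (∀ t ∈ Set.Icc t₀ T, ulo ≤ w t ∧ w t ≤ uhi) →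
      (endpoint1 A b t₀ T w) i =
        (∫ t in t₀..t₁, w t * f t) + (∫ t in t₁..t₂', w t * f t) + (∫ t in t₂'..T, w t * f t) := by
    intro w hw hwb
    have e1 : (endpoint1 A b t₀ T w) i = ∫ t in t₀..T, w t * f t := by
      have hcomm := Li.intervalIntegral_comp_comm (key w hw hwb t₀ T ht₀I htTI)
      calc (endpoint1 A b t₀ T w) i = Li (∫ t in t₀..T, w t • v t) := rfl
        _ = ∫ t in t₀..T, Li (w t • v t) := hcomm.symm
        _ = ∫ t in t₀..T, w t * f t := by
            apply intervalIntegral.integral_congr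
            intro t _
            beta_reduce
            rw [hLi_apply]
            simp [hf_def]
    rw [e1,
      ← intervalIntegral.integral_add_adjacent_intervals
        (keyf w hw hwb t₀ t₂' ht₀I ht₂'I) (keyf w hw hwb t₂' T ht₂'I htTI),
      ← intervalIntegral.integral_add_adjacent_intervals
        (keyf w hw hwb t₀ t₁ ht₀I ht₁I) (keyf w hw hwb t₁ t₂' ht₁I ht₂'I)]
  -- c-values agree with p
  have hcu : c ⬝ᵥ p = ∫ t in t₀..T, u t * psi1 A b T c t := by
    rw [hpu]
    exact hc_int u humeas hubd
  have hc_eq : ∀ w : ℝ → ℝ, Measurable w → (∀ t ∈ Set.Icc t₀ T, ulo ≤ w t ∧ w t ≤ uhi) →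
      (∀ t, t ∉ S → w t = u t) →
      c ⬝ᵥ endpoint1 A b t₀ T w = c ⬝ᵥ p := by
    intro w hw hwb hwu
    rw [hc_int w hw hwb, hcu]
    apply intervalIntegral.integral_congr
    intro t _
    beta_reduce
    by_cases hts : t ∈ S
    · have h0 : psi1 A b T c t = 0 :=
        hψ t ⟨le_of_lt hts.1, le_trans (le_of_lt hts.2) h₂'₂⟩
      rw [h0, mul_zero, mul_zero]
    · rw [hwu t hts]
  have hcup : c ⬝ᵥ endpoint1 A b t₀ T up = c ⬝ᵥ p := by
    apply hc_eq up hup_meas hup_bd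
    intro t hts
    simp only [hup_def, if_neg hts]
  have hcum : c ⬝ᵥ endpoint1 A b t₀ T um = c ⬝ᵥ p := by
    apply hc_eq um hum_meas hum_bd
    intro t hts
    simp only [hum_def, if_neg hts]
  -- outer pieces agree; middle pieces are constants
  have hae : ∀ᵐ t : ℝ, t ≠ t₂' := by
    rw [MeasureTheory.ae_iff]
    have hset : {a : ℝ | ¬ a ≠ t₂'} = {t₂'} := by
      ext x; simp
    rw [hset]
    exact Real.volume_singleton
  have houter : ∀ w : ℝ → ℝ, (∀ t, t ∉ S → w t = u t) →
      (∫ t in t₀..t₁, w t * f t) = (∫ t in t₀..t₁, u t * f t) ∧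
      (∫ t in t₂'..T, w t * f t) = (∫ t in t₂'..T, u t * f t) := by
    intro w hwu
    constructor
    · apply intervalIntegral.integral_congr
      intro t htI
      beta_reduce
      rw [Set.uIcc_of_le ht₀₁] at htI
      have hts : t ∉ S := fun hS => absurd hS.1 (not_lt.2 htI.2)
      rw [hwu t hts]
    · apply intervalIntegral.integral_congr
      intro t htI
      beta_reduce
      rw [Set.uIcc_of_le (by linarith : t₂' ≤ T)] at htI
      have hts : t ∉ S := fun hS => absurd hS.2 (not_lt.2 htI.1)
      rw [hwu t hts]
  have hmid : ∀ (w : ℝ → ℝ) (r : ℝ), (∀ t ∈ S, w t = r) →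
      (∫ t in t₁..t₂', w t * f t) = r * ∫ t in t₁..t₂', f t := by
    intro w r hwr
    rw [← intervalIntegral.integral_const_mul]
    apply intervalIntegral.integral_congr_ae
    filter_upwards [hae] with t htne htI
    rw [Set.uIoc_of_le (le_of_lt h₁₂')] at htI
    have hts : t ∈ S := ⟨htI.1, lt_of_le_of_ne htI.2 htne⟩
    rw [hwr t hts]
  -- the two endpoints differ in coordinate i
  have hup_i : (endpoint1 A b t₀ T up) i =
      (∫ t in t₀..t₁, u t * f t) + uhi * (∫ t in t₁..t₂', f t) + (∫ t in t₂'..T, u t * f t) := by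
    rw [hsplit up hup_meas hup_bd,
      (houter up (fun t hts => by simp only [hup_def, if_neg hts])).1,
      (houter up (fun t hts => by simp only [hup_def, if_neg hts])).2,
      hmid up uhi (fun t hts => by simp only [hup_def, if_pos hts])]
  have hum_i : (endpoint1 A b t₀ T um) i =
      (∫ t in t₀..t₁, u t * f t) + ulo * (∫ t in t₁..t₂', f t) + (∫ t in t₂'..T, u t * f t) := by
    rw [hsplit um hum_meas hum_bd,
      (houter um (fun t hts => by simp only [hum_def, if_neg hts])).1,
      (houter um (fun t hts => by simp only [hum_def, if_neg hts])).2,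
      hmid um ulo (fun t hts => by simp only [hum_def, if_pos hts])]
  have hne : endpoint1 A b t₀ T up ≠ endpoint1 A b t₀ T um := by
    intro hcontra
    have h4 : (endpoint1 A b t₀ T up) i = (endpoint1 A b t₀ T um) i := by rw [hcontra]
    rw [hup_i, hum_i] at h4
    have h5 : (uhi - ulo) * (∫ t in t₁..t₂', f t) = 0 := by linarith
    rcases mul_eq_zero.1 h5 with h6 | h6
    · linarith
    · exact hint_ne h6
  -- conclude
  have hmem_up : endpoint1 A b t₀ T up ∈ ReachSet1 A b t₀ T ulo uhi := ⟨up, hadm_up, rfl⟩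
  have hmem_um : endpoint1 A b t₀ T um ∈ ReachSet1 A b t₀ T ulo uhi := ⟨um, hadm_um, rfl⟩
  rcases eq_or_ne (endpoint1 A b t₀ T up) p with hqp | hqp
  · have hqm : endpoint1 A b t₀ T um ≠ p := by
      rw [← hqp]
      exact fun h => hne h.symm
    have := hexposing _ hmem_um hqm
    rw [hcum] at this
    exact lt_irrefl _ this
  · have := hexposing _ hmem_up hqp
    rw [hcup] at this
    exact lt_irrefl _ this
end
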